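/- Suppose the system is SOST (contractive after a small overshoot and short transient) on Ω with respect to the norm |·|, and is T-periodic, i.e., x(t+T, t₁+T, a) = x(t, t₁, a) for all t ≥ t₁ ≥ 0 and a ∈ Ω. Then for every t₀ ≥ 0 there exists a trajectory γ : [t₀, ∞) → Ω (i.e., γ(t) = x(t, s, γ(s)) for all t ≥ s ≥ t₀) that is periodic with period T (γ(t+T) = γ(t) for all t ≥ t₀), this T-periodic trajectory is unique, and for every a ∈ Ω, |x(t, t₀, a) − γ(t)| → 0 as t → ∞. -/

import Mathlib

open Filter Topology

lemma seminorm_bound {n : ℕ} (ν : Seminorm ℝ (Fin n → ℝ)) :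
    ∃ C : ℝ, 0 ≤ C ∧ ∀ y, ν y ≤ C * ‖y‖ := by
  refine ⟨∑ i, ν (fun j => if i = j then 1 else 0), Finset.sum_nonneg fun i _ => apply_nonneg _ _, fun y => ?_⟩
  calc ν y = ν (∑ i, y i • fun j => if i = j then (1:ℝ) else 0) := by rw [← pi_eq_sum_univ y]
    _ ≤ ∑ i, ν (y i • fun j => if i = j then (1:ℝ) else 0) := by
        exact Finset.le_sum_of_subadditive ν (map_zero ν).le (fun a b => map_add_le_add ν a b) _ _
    _ ≤ ∑ i, ‖y‖ * ν (fun j => if i = j then (1:ℝ) else 0) := by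
        refine Finset.sum_le_sum fun i _ => ?_
        rw [map_smul_eq_mul]
        exact mul_le_mul_of_nonneg_right (norm_le_pi_norm y i) (apply_nonneg _ _)
    _ = (∑ i, ν (fun j => if i = j then (1:ℝ) else 0)) * ‖y‖ := by
        rw [← Finset.mul_sum, mul_comm]

lemma seminorm_cont {n : ℕ} (ν : Seminorm ℝ (Fin n → ℝ)) : Continuous ν := by
  obtain ⟨C, hC0, hC⟩ := seminorm_bound ν
  refine LipschitzWith.continuous (K := ⟨C, hC0⟩) ?_
  refine LipschitzWith.of_dist_le_mul fun a b => ?_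
  calc dist (ν a) (ν b) = ‖(ν a : ℝ) - ν b‖ := rfl
    _ ≤ ν (a - b) := ν.norm_sub_map_le_sub a b
    _ ≤ C * ‖a - b‖ := hC _
    _ = ↑(⟨C, hC0⟩ : NNReal) * dist a b := by rw [dist_eq_norm]

lemma contraction_fixed {n : ℕ} (Ω : Set (Fin n → ℝ)) (hne : Ω.Nonempty) (hcomp : IsCompact Ω)
    (ν : Seminorm ℝ (Fin n → ℝ)) (hνdef : ∀ y, ν y = 0 → y = 0)
    (Q : (Fin n → ℝ) → (Fin n → ℝ)) (hQΩ : ∀ a ∈ Ω, Q a ∈ Ω) (hQc : ContinuousOn Q Ω)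
    (c : ℝ) (hc1 : c < 1)
    (hcontr : ∀ a ∈ Ω, ∀ b ∈ Ω, ν (Q a - Q b) ≤ c * ν (a - b)) :
    ∃ p ∈ Ω, Q p = p := by
  have hg : ContinuousOn (fun a => (ν (Q a - a) : ℝ)) Ω :=
    (seminorm_cont ν).comp_continuousOn (hQc.sub continuousOn_id)
  obtain ⟨p, hpΩ, hmin⟩ := hcomp.exists_isMinOn hne hg
  refine ⟨p, hpΩ, ?_⟩
  have h1 : ν (Q p - p) ≤ ν (Q (Q p) - Q p) := hmin (hQΩ p hpΩ)
  have h2 : ν (Q (Q p) - Q p) ≤ c * ν (Q p - p) := hcontr _ (hQΩ p hpΩ) _ hpΩ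
  have h3 : (0:ℝ) ≤ ν (Q p - p) := apply_nonneg _ _
  have h4 : ν (Q p - p) = 0 := by nlinarith
  have := hνdef _ h4
  rwa [sub_eq_zero] at this

/-- A SOST system with a `T`-periodic solution map admits, for every
initial time `t₀ ≥ 0`, a unique `T`-periodic trajectory `γ : [t₀,∞) → Ω`, and every
solution converges to it. -/
theorem sost_periodic_entrainment {n : ℕ}
    (Ω : Set (Fin n → ℝ)) (hne : Ω.Nonempty) (hcomp : IsCompact Ω) (hconv : Convex ℝ Ω)
    (ν : Seminorm ℝ (Fin n → ℝ)) (hνdef : ∀ y, ν y = 0 → y = 0)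
    (T : ℝ) (hT : 0 < T)
    (x : ℝ → ℝ → (Fin n → ℝ) → (Fin n → ℝ))
    (hmem : ∀ t t₁ a, 0 ≤ t₁ → t₁ ≤ t → a ∈ Ω → x t t₁ a ∈ Ω)
    (hinit : ∀ t₁ a, 0 ≤ t₁ → a ∈ Ω → x t₁ t₁ a = a)
    (hcoc : ∀ t₁ t₂ t₃ a, 0 ≤ t₁ → t₁ ≤ t₂ → t₂ ≤ t₃ → a ∈ Ω →
      x t₃ t₂ (x t₂ t₁ a) = x t₃ t₁ a)
    (hcont : ∀ t t₁, 0 ≤ t₁ → t₁ ≤ t → ContinuousOn (fun a => x t t₁ a) Ω)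
    (hSOST : ∀ ε > (0:ℝ), ∀ τ > (0:ℝ), ∃ ℓ > (0:ℝ), ∀ t₁ t₂ : ℝ, 0 ≤ t₁ → t₁ ≤ t₂ →
      ∀ a ∈ Ω, ∀ b ∈ Ω,
        ν (x (t₂ + τ) t₁ a - x (t₂ + τ) t₁ b) ≤
          (1 + ε) * Real.exp (-ℓ * (t₂ - t₁)) * ν (a - b))
    (hper : ∀ t t₁ a, 0 ≤ t₁ → t₁ ≤ t → a ∈ Ω → x (t + T) (t₁ + T) a = x t t₁ a) :
    ∀ t₀ ≥ (0:ℝ), ∃ γ : ℝ → (Fin n → ℝ),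
      ((∀ t ≥ t₀, γ t ∈ Ω) ∧
       (∀ s t, t₀ ≤ s → s ≤ t → γ t = x t s (γ s)) ∧
       (∀ t ≥ t₀, γ (t + T) = γ t)) ∧
      (∀ γ' : ℝ → (Fin n → ℝ),
        ((∀ t ≥ t₀, γ' t ∈ Ω) ∧
         (∀ s t, t₀ ≤ s → s ≤ t → γ' t = x t s (γ' s)) ∧
         (∀ t ≥ t₀, γ' (t + T) = γ' t)) →
        ∀ t ≥ t₀, γ' t = γ t) ∧
      (∀ a ∈ Ω, Tendsto (fun t => ν (x t t₀ a - γ t)) atTop (𝓝 0)) := by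
  intro t₀ ht₀
  set P : (Fin n → ℝ) → (Fin n → ℝ) := fun a => x (t₀ + T) t₀ a with hP
  -- iterated periodicity
  have hshift : ∀ (k : ℕ) (t t₁ : ℝ) (a : Fin n → ℝ), 0 ≤ t₁ → t₁ ≤ t → a ∈ Ω →
      x (t + k * T) (t₁ + k * T) a = x t t₁ a := by
    intro k
    induction k with
    | zero => intro t t₁ a _ _ _; simp
    | succ k ih =>
      intro t t₁ a h0 h1 ha
      have e1 : t + ((k:ℕ)+1:ℕ) * T = (t + k * T) + T := by push_cast; ring
      have e2 : t₁ + ((k:ℕ)+1:ℕ) * T = (t₁ + k * T) + T := by push_cast; ring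
      rw [e1, e2, hper (t + k*T) (t₁ + k*T) a (by positivity) (by nlinarith [Nat.cast_nonneg (α := ℝ) k]) ha,
        ih t t₁ a h0 h1 ha]
  have hkT : ∀ k : ℕ, (0:ℝ) ≤ k * T := fun k => by positivity
  -- iterate formula
  have hiter : ∀ (k : ℕ) (a : Fin n → ℝ), a ∈ Ω → P^[k] a = x (t₀ + k * T) t₀ a := by
    intro k
    induction k with
    | zero => intro a ha; simpa using (hinit t₀ a ht₀ ha).symm
    | succ k ih =>
      intro a ha
      rw [Function.iterate_succ_apply', ih a ha]
      have hmem' : x (t₀ + k * T) t₀ a ∈ Ω := hmem _ _ _ ht₀ (by nlinarith [hkT k]) ha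
      have e1 : t₀ + T + k * T = t₀ + ((k:ℕ)+1:ℕ) * T := by push_cast; ring
      calc P (x (t₀ + k*T) t₀ a) = x (t₀ + T) t₀ (x (t₀ + k*T) t₀ a) := rfl
        _ = x (t₀ + T + k*T) (t₀ + k*T) (x (t₀ + k*T) t₀ a) := by
            rw [hshift k (t₀ + T) t₀ _ ht₀ (by linarith) hmem']
        _ = x (t₀ + ((k:ℕ)+1:ℕ) * T) t₀ a := by
            rw [hcoc t₀ (t₀ + k*T) (t₀ + T + k*T) a ht₀ (by nlinarith [hkT k]) (by linarith) ha, e1]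
  have hPmem : ∀ (k : ℕ) (a : Fin n → ℝ), a ∈ Ω → P^[k] a ∈ Ω := by
    intro k a ha
    rw [hiter k a ha]; exact hmem _ _ _ ht₀ (by nlinarith [hkT k]) ha
  -- contraction over k periods
  obtain ⟨ℓ, hℓ, hcontr⟩ := hSOST 1 one_pos T hT
  set m : ℕ := ⌈Real.log 2 / (ℓ * T)⌉₊ + 1 with hm
  set c : ℝ := 2 * Real.exp (-ℓ * (m * T)) with hc
  have hc1 : c < 1 := by
    have hmT : Real.log 2 < ℓ * (m * T) := by
      have h1 : Real.log 2 / (ℓ * T) ≤ (⌈Real.log 2 / (ℓ * T)⌉₊ : ℝ) := Nat.le_ceil _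
      have h2 : (⌈Real.log 2 / (ℓ * T)⌉₊ : ℝ) < m := by rw [hm]; push_cast; linarith
      have hℓT : 0 < ℓ * T := by positivity
      have := (div_lt_iff₀ hℓT).mp (lt_of_le_of_lt h1 h2)
      nlinarith
    have : (2:ℝ) < Real.exp (ℓ * (m * T)) := by
      calc (2:ℝ) = Real.exp (Real.log 2) := (Real.exp_log two_pos).symm
        _ < Real.exp (ℓ * (m * T)) := Real.exp_lt_exp.mpr hmT
    rw [hc, neg_mul, Real.exp_neg]
    rw [mul_inv_lt_iff₀ (Real.exp_pos _)]
    linarith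
  set k : ℕ := m + 1 with hk
  set Q : (Fin n → ℝ) → (Fin n → ℝ) := P^[k] with hQ
  have hQcontr : ∀ a ∈ Ω, ∀ b ∈ Ω, ν (Q a - Q b) ≤ c * ν (a - b) := by
    intro a ha b hb
    rw [hQ, hiter k a ha, hiter k b hb]
    have e1 : t₀ + (k:ℕ) * T = (t₀ + m * T) + T := by rw [hk]; push_cast; ring
    have e2 : t₀ + (m:ℝ) * T - t₀ = m * T := by ring
    have := hcontr t₀ (t₀ + m * T) ht₀ (by nlinarith [hkT m]) a ha b hb
    rw [e2] at this
    rw [e1]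
    calc ν (x (t₀ + m*T + T) t₀ a - x (t₀ + m*T + T) t₀ b)
        ≤ (1+1) * Real.exp (-ℓ * (m * T)) * ν (a - b) := this
      _ = c * ν (a - b) := by rw [hc]; ring
  have hQΩ : ∀ a ∈ Ω, Q a ∈ Ω := fun a ha => hPmem k a ha
  have hQc : ContinuousOn Q Ω :=
    (hcont (t₀ + k * T) t₀ ht₀ (by nlinarith [hkT k])).congr (fun a ha => hiter k a ha)
  obtain ⟨p, hpΩ, hQp⟩ := contraction_fixed Ω hne hcomp ν hνdef Q hQΩ hQc c hc1 hQcontr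
  have huniq : ∀ q ∈ Ω, Q q = q → q = p := by
    intro q hq hQq
    have h1 : ν (q - p) ≤ c * ν (q - p) := by
      have := hQcontr q hq p hpΩ
      rwa [hQq, hQp] at this
    have h2 : (0:ℝ) ≤ ν (q - p) := apply_nonneg _ _
    have h3 : ν (q - p) = 0 := by nlinarith
    have := hνdef _ h3
    rwa [sub_eq_zero] at this
  -- P p = p
  have hPp : P p = p := by
    have hPpΩ : P p ∈ Ω := hmem _ _ _ ht₀ (by linarith) hpΩ
    have : Q (P p) = P p := by
      calc Q (P p) = P^[k+1] p := (Function.iterate_succ_apply P k p).symm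
        _ = P (P^[k] p) := Function.iterate_succ_apply' P k p
        _ = P p := by rw [show P^[k] p = p from hQp]
    exact huniq (P p) hPpΩ this
  have hfix : x (t₀ + T) t₀ p = p := hPp
  refine ⟨fun t => x t t₀ p, ⟨fun t ht => hmem t t₀ p ht₀ ht hpΩ,
    fun s t hs hst => (hcoc t₀ s t p ht₀ hs hst hpΩ).symm, fun t ht => ?_⟩, ?_, ?_⟩
  · -- periodicity
    calc x (t + T) t₀ p = x (t + T) (t₀ + T) (x (t₀ + T) t₀ p) :=
          (hcoc t₀ (t₀ + T) (t + T) p ht₀ (by linarith) (by linarith) hpΩ).symm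
      _ = x (t + T) (t₀ + T) p := by rw [hfix]
      _ = x t t₀ p := hper t t₀ p ht₀ ht hpΩ
  · -- uniqueness
    rintro γ' ⟨h1, h2, h3⟩ t ht
    have hqΩ : γ' t₀ ∈ Ω := h1 t₀ le_rfl
    have hPq : P (γ' t₀) = γ' t₀ := by
      have := h2 t₀ (t₀ + T) le_rfl (by linarith)
      show x (t₀ + T) t₀ (γ' t₀) = γ' t₀
      rw [← this]; exact h3 t₀ le_rfl
    have hQq : Q (γ' t₀) = γ' t₀ := by rw [hQ, Function.iterate_fixed hPq]
    have hq : γ' t₀ = p := huniq _ hqΩ hQq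
    rw [h2 t₀ t le_rfl ht, hq]
  · -- convergence
    intro a ha
    obtain ⟨ℓ₂, hℓ₂, hc2⟩ := hSOST 1 one_pos 1 one_pos
    have hbd : ∀ t : ℝ, t₀ + 1 ≤ t →
        ν (x t t₀ a - x t t₀ p) ≤ 2 * Real.exp (-ℓ₂ * (t - 1 - t₀)) * ν (a - p) := by
      intro t ht
      have := hc2 t₀ (t - 1) ht₀ (by linarith) a ha p hpΩ
      have e : t - 1 + 1 = t := by ring
      rw [e] at this
      calc ν (x t t₀ a - x t t₀ p) ≤ (1+1) * Real.exp (-ℓ₂ * (t - 1 - t₀)) * ν (a - p) := this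
        _ = 2 * Real.exp (-ℓ₂ * (t - 1 - t₀)) * ν (a - p) := by norm_num
    have hg0 : Tendsto (fun t : ℝ => 2 * Real.exp (-ℓ₂ * (t - 1 - t₀)) * ν (a - p)) atTop (𝓝 0) := by
      have h1 : Tendsto (fun t : ℝ => -ℓ₂ * (t - 1 - t₀)) atTop atBot := by
        have h2 : Tendsto (fun t : ℝ => t - 1 - t₀) atTop atTop :=
          (tendsto_atTop_add_const_right _ (-1 - t₀) tendsto_id).congr (fun t => by simp only [id_eq]; ring)
        exact h2.const_mul_atTop_of_neg (by linarith)
      have h3 : Tendsto (fun t : ℝ => Real.exp (-ℓ₂ * (t - 1 - t₀))) atTop (𝓝 0) :=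
        Real.tendsto_exp_atBot.comp h1
      have := (h3.const_mul 2).mul_const (ν (a - p))
      simpa using this
    refine squeeze_zero' (Eventually.of_forall fun t => apply_nonneg _ _) ?_ hg0
    filter_upwards [eventually_ge_atTop (t₀ + 1)] with t ht
    exact hbd t ht
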